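/- (Asymptotics of the single-interval Fisher information.) For reals γ > 0 and T > 0, define F(γ, T) = 1 − γ² − √(1 − e^{−2γT}) + γ²/√(1 − e^{−2γT}). Then, as the natural number k tends to infinity, F(γ, T/k)/√k converges to γ^{3/2}/√(2T); i.e., the sequence k ↦ F(γ, T/k)/√k tends to √(γ³/(2T)). -/

import Mathlib

/-- The classical Fisher information
`F(γ,T) = 1 − γ² − √(1 − e^{−2γT}) + γ²/√(1 − e^{−2γT})` for estimating the
duration `T` on a clock qubit with dephasing rate `γ`. -/
noncomputable def Floc (γ T : ℝ) : ℝ :=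
  1 - γ^2 - Real.sqrt (1 - Real.exp (-2*γ*T))
    + γ^2 / Real.sqrt (1 - Real.exp (-2*γ*T))

/-- Asymptotics of the single-interval Fisher information:
`F(γ, T/k)/√k → γ^{3/2}/√(2T) = √(γ³/(2T))` as `k → ∞`. -/
theorem stmt_14 (γ T : ℝ) (hγ : 0 < γ) (hT : 0 < T) :
    Filter.Tendsto (fun k : ℕ => Floc γ (T / k) / Real.sqrt k)
      Filter.atTop (nhds (Real.sqrt (γ^3 / (2*T)))) := by
  set c : ℝ := 2*γ*T with hc
  have hcpos : 0 < c := by positivity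
  -- derivative of exp at 0
  have hd : Filter.Tendsto (fun h : ℝ => (Real.exp h - 1)/h)
      (nhdsWithin 0 {(0:ℝ)}ᶜ) (nhds 1) := by
    have h0 := hasDerivAt_iff_tendsto_slope.mp (Real.hasDerivAt_exp 0)
    simp only [Real.exp_zero] at h0
    refine h0.congr (fun x => ?_)
    simp [slope_def_field, Real.exp_zero]
  -- -c/k tends to 0 within {≠0}
  have t0 : Filter.Tendsto (fun k : ℕ => -c/(k:ℝ)) Filter.atTop (nhds 0) :=
    Filter.Tendsto.div_atTop tendsto_const_nhds tendsto_natCast_atTop_atTop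
  have tne : ∀ᶠ k : ℕ in Filter.atTop, -c/(k:ℝ) ∈ ({(0:ℝ)}ᶜ : Set ℝ) := by
    filter_upwards [Filter.eventually_ge_atTop 1] with k hk
    have hk' : (0:ℝ) < k := by exact_mod_cast hk
    simp only [Set.mem_compl_iff, Set.mem_singleton_iff]
    exact div_ne_zero (neg_ne_zero.mpr (ne_of_gt hcpos)) (ne_of_gt hk')
  have hcomp : Filter.Tendsto (fun k : ℕ => -c/(k:ℝ)) Filter.atTop
      (nhdsWithin 0 {(0:ℝ)}ᶜ) :=
    tendsto_nhdsWithin_iff.mpr ⟨t0, tne⟩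
  -- key limit: k*(1 - exp(-c/k)) → c
  have hA : Filter.Tendsto (fun k : ℕ => (k:ℝ) * (1 - Real.exp (-c/(k:ℝ))))
      Filter.atTop (nhds c) := by
    have h1 := (hd.comp hcomp).mul_const c
    rw [one_mul] at h1
    refine h1.congr' ?_
    filter_upwards [Filter.eventually_ge_atTop 1] with k hk
    have hk' : (0:ℝ) < k := by exact_mod_cast hk
    have key : ∀ e : ℝ, (e - 1)/(-c/(k:ℝ)) * c = (k:ℝ) * (1 - e) := by
      intro e
      rw [div_div_eq_mul_div, div_mul_eq_mul_div,
        div_eq_iff (neg_ne_zero.mpr hcpos.ne')]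
      ring
    exact key _
  -- hence sqrt(1-exp(-c/k)) * sqrt k → sqrt c
  have hB : Filter.Tendsto
      (fun k : ℕ => Real.sqrt (1 - Real.exp (-c/(k:ℝ))) * Real.sqrt k)
      Filter.atTop (nhds (Real.sqrt c)) := by
    have := (Real.continuous_sqrt.tendsto c).comp hA
    refine this.congr (fun k => ?_)
    simp only [Function.comp_apply]
    rw [Real.sqrt_mul (by positivity), mul_comm]
  have hsqrt_top : Filter.Tendsto Real.sqrt Filter.atTop Filter.atTop := by
    refine Filter.tendsto_atTop_atTop.mpr (fun b => ⟨(max b 0)^2, fun a ha => ?_⟩)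
    calc b ≤ max b 0 := le_max_left _ _
      _ = Real.sqrt ((max b 0)^2) := (Real.sqrt_sq (le_max_right _ _)).symm
      _ ≤ Real.sqrt a := Real.sqrt_le_sqrt ha
  have hsqrtk : Filter.Tendsto (fun k : ℕ => Real.sqrt k) Filter.atTop Filter.atTop :=
    hsqrt_top.comp tendsto_natCast_atTop_atTop
  -- piece 1
  have h1 : Filter.Tendsto (fun k : ℕ => (1 - γ^2)/Real.sqrt k)
      Filter.atTop (nhds 0) :=
    Filter.Tendsto.div_atTop tendsto_const_nhds hsqrtk
  -- piece 2
  have h2 : Filter.Tendsto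
      (fun k : ℕ => Real.sqrt (1 - Real.exp (-c/(k:ℝ)))/Real.sqrt k)
      Filter.atTop (nhds 0) := by
    have := Filter.Tendsto.div_atTop hB tendsto_natCast_atTop_atTop
    refine this.congr' ?_
    filter_upwards [Filter.eventually_ge_atTop 1] with k hk
    have hk' : (0:ℝ) < k := by exact_mod_cast hk
    have hs : Real.sqrt ((k:ℝ)) * Real.sqrt k = k := Real.mul_self_sqrt (le_of_lt hk')
    have hsk : Real.sqrt (k:ℝ) ≠ 0 := by positivity
    rw [div_eq_div_iff (ne_of_gt hk') hsk, mul_assoc, hs]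
  -- piece 3
  have hsc : Real.sqrt c ≠ 0 := by positivity
  have h3 : Filter.Tendsto
      (fun k : ℕ => γ^2 / (Real.sqrt (1 - Real.exp (-c/(k:ℝ))) * Real.sqrt k))
      Filter.atTop (nhds (γ^2 / Real.sqrt c)) :=
    tendsto_const_nhds.div hB hsc
  have hsum := (h1.sub h2).add h3
  have hval : (0:ℝ) - 0 + γ^2 / Real.sqrt c = Real.sqrt (γ^3 / (2*T)) := by
    rw [zero_sub, neg_zero, zero_add, hc]
    rw [show γ^3/(2*T) = γ^4/(2*γ*T) by field_simp,
      Real.sqrt_div (by positivity),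
      show γ^4 = (γ^2)^2 by ring, Real.sqrt_sq (by positivity)]
  rw [hval] at hsum
  refine hsum.congr (fun k => ?_)
  have harg : -2*γ*(T/(k:ℝ)) = -c/(k:ℝ) := by rw [hc]; ring
  simp only [Floc, harg]
  ring
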